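/- arXiv:1805.01401 — 4 statements merged into one kernel-verified Lean document; each statement's English description precedes it below -/
import Mathlib

section
/- Let α > 0, D ≥ 0, and for t > 0 with e^{2αt} > 1 + D^2 α define λ_t = α(1 - (1 + D^2 α) e^{-2αt}) / (1 - e^{-2αt})^2. Then λ_t ≥ α/2 if and only if e^{-2αt} ≤ √(1 + D^4 α^2) - D^2 α, equivalently t ≥ (1/(2α)) · log(√(1 + D^4 α^2) + D^2 α). -/
theorem ou_bounded_threshold (α D t : ℝ) (hα : 0 < α) (hD : 0 ≤ D) (ht : 0 < t)
    (h : 1 + D^2*α < Real.exp (2*α*t)) :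
    (α/2 ≤ α*(1 - (1 + D^2*α)*Real.exp (-2*α*t))/(1 - Real.exp (-2*α*t))^2 ↔
      Real.exp (-2*α*t) ≤ Real.sqrt (1 + D^4*α^2) - D^2*α) ∧
    (Real.exp (-2*α*t) ≤ Real.sqrt (1 + D^4*α^2) - D^2*α ↔
      (1/(2*α)) * Real.log (Real.sqrt (1 + D^4*α^2) + D^2*α) ≤ t) := by
  have hx0 : 0 < Real.exp (-2*α*t) := Real.exp_pos _
  set x := Real.exp (-2*α*t) with hxdef
  have hinv : Real.exp (2*α*t) = 1/x := by
    rw [hxdef, one_div, ← Real.exp_neg]; ring_nf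
  have hxlt : (1 + D^2*α) * x < 1 := by
    rw [hinv] at h
    have := mul_lt_mul_of_pos_right h hx0
    rwa [one_div, inv_mul_cancel₀ (ne_of_gt hx0)] at this
  have hx1 : x < 1 := by nlinarith [mul_nonneg (mul_nonneg (sq_nonneg D) hα.le) hx0.le]
  have hs : Real.sqrt (1 + D^4*α^2) ^ 2 = 1 + D^4*α^2 := Real.sq_sqrt (by positivity)
  have hsnn : 0 ≤ Real.sqrt (1 + D^4*α^2) := Real.sqrt_nonneg _
  have hs1 : 1 ≤ Real.sqrt (1 + D^4*α^2) := by nlinarith [sq_nonneg (D^2*α)]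
  set s := Real.sqrt (1 + D^4*α^2) with hsdef
  have hpos : 0 < s + D^2*α := by positivity
  have hprod : (s - D^2*α) * (s + D^2*α) = 1 := by nlinarith
  have hd : 0 < (1 - x)^2 := pow_pos (by linarith) 2
  have hpos2 : 0 < x + D^2*α + s := by nlinarith [mul_nonneg (sq_nonneg D) hα.le]
  constructor
  · rw [div_le_div_iff₀ (by norm_num) hd, mul_assoc, mul_le_mul_iff_right₀ hα]
    constructor
    · intro h1
      nlinarith [hs, hpos2, hpos]
    · intro h1
      nlinarith [hs, hpos2, hpos]
  · constructor
    · intro hxle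
      have h2 : s + D^2*α ≤ Real.exp (2*α*t) := by
        rw [hinv, le_div_iff₀ hx0]
        nlinarith
      have h3 : Real.log (s + D^2*α) ≤ 2*α*t := by
        rw [← Real.log_exp (2*α*t)]
        exact Real.log_le_log hpos h2
      calc (1/(2*α)) * Real.log (s + D^2*α) ≤ (1/(2*α)) * (2*α*t) :=
            mul_le_mul_of_nonneg_left h3 (by positivity)
        _ = t := by field_simp
    · intro hle
      have h3 : Real.log (s + D^2*α) ≤ 2*α*t := by
        have := mul_le_mul_of_nonneg_left hle (by positivity : (0:ℝ) ≤ 2*α)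
        have heq : 2*α*((1/(2*α)) * Real.log (s + D^2*α)) = Real.log (s + D^2*α) := by
          field_simp
        linarith [heq ▸ this]
      have h2 : s + D^2*α ≤ Real.exp (2*α*t) := by
        calc s + D^2*α = Real.exp (Real.log (s + D^2*α)) := (Real.exp_log hpos).symm
          _ ≤ _ := Real.exp_le_exp.mpr h3
      rw [hinv, le_div_iff₀ hx0] at h2
      nlinarith
end

section
/- Let X be an ℝ-valued (or ℝ^n-valued) random variable with E[|X|^4] < ∞, and for a sub-σ-algebra (or conditioning variable) Y let Var(X | Y=y) denote the conditional variance. Then E[(Var(X | Y))^2] ≤ E[‖X - E[X]‖^4]. -/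
open MeasureTheory

section Aux

lemma enn_half : (1:ENNReal)/1 = 1/2 + 1/2 := by
  simp only [one_div, inv_one]
  exact ENNReal.inv_two_add_inv_two.symm

lemma enn_quarter : (1:ENNReal)/2 = 1/4 + 1/4 := by
  simp only [one_div]
  rw [← two_mul, show (4:ENNReal) = 2*2 by norm_num, ENNReal.mul_inv (by norm_num) (by norm_num),
    ← mul_assoc, ENNReal.mul_inv_cancel (by norm_num) (by norm_num), one_mul]

variable {Ω : Type*} {m m0 : MeasurableSpace Ω}

/-- L² contractivity (membership) of conditional expectation. -/
lemma memL2_condexp_aux (hm : m ≤ m0) (μ : @Measure Ω m0) [IsFiniteMeasure μ]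
    {f : Ω → ℝ} (hf : MemLp f 2 μ) : MemLp (condExp m μ f) 2 μ := by
  haveI : SigmaFinite (μ.trim hm) := inferInstance
  set fL : Lp ℝ 2 μ := hf.toLp f with hfL
  have heq : (condExpL2 ℝ ℝ hm fL : Ω → ℝ) =ᵐ[μ] μ[f|m] := by
    refine ae_eq_condExp_of_forall_setIntegral_eq hm (hf.integrable one_le_two) ?_ ?_ ?_
    · exact fun s _ _ => ((Lp.memLp _).integrable one_le_two).integrableOn
    · intro s hs hμs
      rw [integral_condExpL2_eq hm fL hs hμs.ne]
      exact setIntegral_congr_ae (hm s hs) ((hf.coeFn_toLp).mono fun x hx _ => hx)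
    · exact aestronglyMeasurable_condExpL2 hm fL
  exact (Lp.memLp _).ae_eq heq

/-- product of two L² functions is integrable -/
lemma integrable_mul_of_memL2 {μ : @Measure Ω m0} {f g : Ω → ℝ}
    (hf : MemLp f 2 μ) (hg : MemLp g 2 μ) : Integrable (fun ω => f ω * g ω) μ := by
  have h := hg.smul hf (p := 2) (q := 2) (r := 1) (hpqr := ⟨by simpa [one_div] using enn_half.symm⟩)
  rw [memLp_one_iff_integrable] at h
  exact h.congr (Filter.Eventually.of_forall fun ω => rfl)

/-- conditional Jensen for the square, for L² functions -/
lemma condexp_sq_le_aux (hm : m ≤ m0) (μ : @Measure Ω m0) [IsFiniteMeasure μ]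
    {f : Ω → ℝ} (hf : MemLp f 2 μ) :
    ∀ᵐ ω ∂μ, (condExp m μ f ω) ^ 2 ≤ condExp m μ (fun ω' => f ω' ^ 2) ω := by
  haveI : SigmaFinite (μ.trim hm) := inferInstance
  set c := μ[f|m] with hc
  have hcm : StronglyMeasurable[m] c := stronglyMeasurable_condExp
  have hc2 : MemLp c 2 μ := memL2_condexp_aux hm μ hf
  set F : Ω → ℝ := fun ω => f ω ^ 2 with hF
  set C : Ω → ℝ := fun ω => c ω ^ 2 with hC
  set H : Ω → ℝ := fun ω => 2 * c ω * f ω with hH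
  have hFint : Integrable F μ :=
    (integrable_mul_of_memL2 hf hf).congr (Filter.Eventually.of_forall fun ω => (pow_two (f ω)).symm)
  have hCint : Integrable C μ :=
    (integrable_mul_of_memL2 hc2 hc2).congr (Filter.Eventually.of_forall fun ω => (pow_two (c ω)).symm)
  have hHint : Integrable H μ := by
    have := (integrable_mul_of_memL2 hc2 hf).const_mul 2
    exact this.congr (Filter.Eventually.of_forall fun ω => by simp [hH]; ring)
  have e1 : μ[F + C - H|m] =ᵐ[μ] μ[F + C|m] - μ[H|m] := condExp_sub (hFint.add hCint) hHint m
  have e2 : μ[F + C|m] =ᵐ[μ] μ[F|m] + μ[C|m] := condExp_add hFint hCint m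
  have e3 : μ[C|m] = C := condExp_of_stronglyMeasurable hm (hcm.pow 2) hCint
  have e4 : μ[H|m] =ᵐ[μ] (fun ω => 2 * c ω) * μ[f|m] := by
    have hmul : StronglyMeasurable[m] (fun ω => 2 * c ω) := hcm.const_mul 2
    have : μ[(fun ω => 2 * c ω) * f|m] =ᵐ[μ] (fun ω => 2 * c ω) * μ[f|m] :=
      condExp_mul_of_stronglyMeasurable_left hmul
        (hHint.congr (Filter.Eventually.of_forall fun ω => rfl))
        (hf.integrable one_le_two)
    exact this
  have h0 : 0 ≤ᵐ[μ] μ[F + C - H|m] := by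
    refine condExp_nonneg (Filter.Eventually.of_forall fun ω => ?_)
    have : (F + C - H) ω = (f ω - c ω) ^ 2 := by
      simp [hF, hC, hH]; ring
    rw [Pi.zero_apply, this]
    exact sq_nonneg _
  filter_upwards [h0, e1, e2, e4] with ω h0 h1 h2 h4
  have hCω : (μ[C|m]) ω = c ω ^ 2 := by rw [e3]
  simp only [Pi.sub_apply, Pi.add_apply, Pi.mul_apply, Pi.zero_apply] at h0 h1 h2 h4
  rw [h1, h2, hCω, h4] at h0
  nlinarith [h0]

end Aux

theorem condVar_sq_le_fourth_moment {Ω : Type*} {m m0 : MeasurableSpace Ω}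
    (hm : m ≤ m0) (μ : @Measure Ω m0) [IsProbabilityMeasure μ]
    (X : Ω → ℝ) (hX : MemLp X 4 μ) :
    ∫ ω, (condExp m μ (fun ω' => (X ω' - condExp m μ X ω')^2) ω)^2 ∂μ
      ≤ ∫ ω, (X ω - ∫ x, X x ∂μ)^4 ∂μ := by
  haveI : SigmaFinite (μ.trim hm) := inferInstance
  set mX : ℝ := ∫ x, X x ∂μ with hmX
  set cX : Ω → ℝ := μ[X|m] with hcX
  have hcXm : StronglyMeasurable[m] cX := stronglyMeasurable_condExp
  have hX2 : MemLp X 2 μ := hX.mono_exponent (by norm_num)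
  have hcX2 : MemLp cX 2 μ := memL2_condexp_aux hm μ hX2
  set Z : Ω → ℝ := fun ω => X ω - mX with hZ
  set D : Ω → ℝ := fun ω => X ω - cX ω with hD
  set g : Ω → ℝ := fun ω => cX ω - mX with hg
  have hZ4 : MemLp Z 4 μ := hX.sub (memLp_const mX)
  have hZ2 : MemLp Z 2 μ := hZ4.mono_exponent (by norm_num)
  have hD2 : MemLp D 2 μ := hX2.sub hcX2
  have hg2 : MemLp g 2 μ := hcX2.sub (memLp_const mX)
  -- membership of squares in L²
  have hZsq2 : MemLp (fun ω => Z ω ^ 2) 2 μ := by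
    have h := hZ4.smul hZ4 (p := 4) (q := 4) (r := 2) (hpqr := ⟨by simpa [one_div] using enn_quarter.symm⟩)
    exact h.ae_eq (Filter.Eventually.of_forall fun ω => (pow_two (Z ω)).symm)
  have hW : Integrable (fun ω => Z ω ^ 2) μ :=
    (integrable_mul_of_memL2 hZ2 hZ2).congr (Filter.Eventually.of_forall fun ω => (pow_two (Z ω)).symm)
  have hDsqInt : Integrable (fun ω => D ω ^ 2) μ :=
    (integrable_mul_of_memL2 hD2 hD2).congr (Filter.Eventually.of_forall fun ω => (pow_two (D ω)).symm)
  have hgsqInt : Integrable (fun ω => g ω ^ 2) μ :=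
    (integrable_mul_of_memL2 hg2 hg2).congr (Filter.Eventually.of_forall fun ω => (pow_two (g ω)).symm)
  have hgDInt : Integrable (fun ω => 2 * g ω * D ω) μ := by
    have := (integrable_mul_of_memL2 hg2 hD2).const_mul 2
    exact this.congr (Filter.Eventually.of_forall fun ω => by simp; ring)
  -- condexp of D is 0
  have hcD : μ[D|m] =ᵐ[μ] 0 := by
    have h1 : μ[X - cX|m] =ᵐ[μ] μ[X|m] - μ[cX|m] :=
      condExp_sub (hX.integrable (by norm_num)) integrable_condExp m
    have h2 : μ[cX|m] = cX :=
      condExp_of_stronglyMeasurable hm hcXm integrable_condExp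
    refine h1.trans ?_
    rw [h2]
    simp [hcX]
  -- pull-out: condexp of 2gD is 0
  have hcgD : μ[fun ω => 2 * g ω * D ω|m] =ᵐ[μ] 0 := by
    have hmul : StronglyMeasurable[m] (fun ω => 2 * g ω) :=
      (hcXm.sub stronglyMeasurable_const).const_mul 2
    have h := condExp_mul_of_stronglyMeasurable_left hmul
      (hgDInt.congr (Filter.Eventually.of_forall fun ω => rfl))
      (hD2.integrable one_le_two)
    refine h.trans ?_
    filter_upwards [hcD] with ω hω
    simp [hω]
  -- key identity: μ[Z²|m] =ᵐ μ[D²|m] + g²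
  have hkey : μ[fun ω => Z ω ^ 2|m] =ᵐ[μ]
      fun ω => (μ[fun ω' => D ω' ^ 2|m]) ω + g ω ^ 2 := by
    have hexp : (fun ω => Z ω ^ 2)
        = (fun ω => D ω ^ 2) + (fun ω => g ω ^ 2) + (fun ω => 2 * g ω * D ω) := by
      funext ω
      simp only [Pi.add_apply, hZ, hD, hg]
      ring
    rw [hexp]
    have e1 : μ[(fun ω => D ω ^ 2) + (fun ω => g ω ^ 2) + (fun ω => 2 * g ω * D ω)|m]
        =ᵐ[μ] μ[(fun ω => D ω ^ 2) + (fun ω => g ω ^ 2)|m] + μ[fun ω => 2 * g ω * D ω|m] :=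
      condExp_add (hDsqInt.add hgsqInt) hgDInt m
    have e2 : μ[(fun ω => D ω ^ 2) + (fun ω => g ω ^ 2)|m]
        =ᵐ[μ] μ[fun ω => D ω ^ 2|m] + μ[fun ω => g ω ^ 2|m] :=
      condExp_add hDsqInt hgsqInt m
    have e3 : μ[fun ω => g ω ^ 2|m] = fun ω => g ω ^ 2 :=
      condExp_of_stronglyMeasurable hm ((hcXm.sub stronglyMeasurable_const).pow 2) hgsqInt
    filter_upwards [e1, e2, hcgD] with ω h1 h2 h3
    simp only [Pi.add_apply, Pi.zero_apply] at h1 h2 h3 ⊢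
    rw [h1, h2, h3, e3]
    ring
  -- nonnegativity and comparison
  have hpos : 0 ≤ᵐ[μ] μ[fun ω => D ω ^ 2|m] :=
    condExp_nonneg (Filter.Eventually.of_forall fun ω => sq_nonneg _)
  have hjensen := condexp_sq_le_aux hm μ hZsq2
  -- pointwise chain
  have hchain : ∀ᵐ ω ∂μ, (μ[fun ω' => D ω' ^ 2|m]) ω ^ 2
      ≤ (μ[fun ω' => (Z ω' ^ 2) ^ 2|m]) ω := by
    filter_upwards [hpos, hkey, hjensen] with ω h0 h1 h2
    simp only [Pi.zero_apply] at h0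
    have hle : (μ[fun ω' => D ω' ^ 2|m]) ω ≤ (μ[fun ω' => Z ω' ^ 2|m]) ω := by
      rw [h1]; nlinarith [sq_nonneg (g ω)]
    calc (μ[fun ω' => D ω' ^ 2|m]) ω ^ 2 ≤ (μ[fun ω' => Z ω' ^ 2|m]) ω ^ 2 := by
          nlinarith
      _ ≤ (μ[fun ω' => (Z ω' ^ 2) ^ 2|m]) ω := h2
  -- integrability of the squared conditional expectations
  have hZsqCE : MemLp (μ[fun ω => Z ω ^ 2|m]) 2 μ := memL2_condexp_aux hm μ hZsq2
  have hInt2 : Integrable (fun ω => (μ[fun ω' => Z ω' ^ 2|m]) ω ^ 2) μ :=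
    (integrable_mul_of_memL2 hZsqCE hZsqCE).congr
      (Filter.Eventually.of_forall fun ω => (pow_two _).symm)
  have hInt1 : Integrable (fun ω => (μ[fun ω' => D ω' ^ 2|m]) ω ^ 2) μ := by
    refine hInt2.mono' ?_ ?_
    · exact ((stronglyMeasurable_condExp.mono hm).pow 2).aestronglyMeasurable
    · filter_upwards [hpos, hkey] with ω h0 h1
      simp only [Pi.zero_apply] at h0
      have hle : (μ[fun ω' => D ω' ^ 2|m]) ω ≤ (μ[fun ω' => Z ω' ^ 2|m]) ω := by
        rw [h1]; nlinarith [sq_nonneg (g ω)]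
      rw [Real.norm_eq_abs, abs_of_nonneg (sq_nonneg _)]
      nlinarith
  have hmain : ∫ ω, (μ[fun ω' => D ω' ^ 2|m]) ω ^ 2 ∂μ
      ≤ ∫ ω, (μ[fun ω' => (Z ω' ^ 2) ^ 2|m]) ω ∂μ :=
    integral_mono_ae hInt1 integrable_condExp hchain
  have hfinal : ∫ ω, (μ[fun ω' => (Z ω' ^ 2) ^ 2|m]) ω ∂μ = ∫ ω, (X ω - mX) ^ 4 ∂μ := by
    rw [integral_condExp hm]
    refine integral_congr_ae (Filter.Eventually.of_forall fun ω => ?_)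
    simp only [hZ]
    ring
  calc ∫ ω, (μ[fun ω' => (X ω' - cX ω') ^ 2|m]) ω ^ 2 ∂μ
      = ∫ ω, (μ[fun ω' => D ω' ^ 2|m]) ω ^ 2 ∂μ := rfl
    _ ≤ ∫ ω, (μ[fun ω' => (Z ω' ^ 2) ^ 2|m]) ω ∂μ := hmain
    _ = ∫ ω, (X ω - mX) ^ 4 ∂μ := hfinal
end

section
/- Let Z be a standard Gaussian random variable in ℝ and let b > 0 and c ≥ max{1, 26/b}. Then E[log(1 + b·e^{cZ - c²/2})] ≤ 3b·e^{-0.085·c²}. -/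
open MeasureTheory ProbabilityTheory
open scoped NNReal ENNReal

lemma glmb_aux_eq (t : ℝ) : (fun x : ℝ => Real.exp (-x^2/2 + t*x))
    = fun x => Real.exp (t^2/2) * Real.exp (-(1/2)*(x-t)^2) := by
  funext x; rw [← Real.exp_add]; ring_nf

lemma glmb_aux_int (t : ℝ) : Integrable (fun x : ℝ => Real.exp (-x^2/2 + t*x)) := by
  rw [glmb_aux_eq]
  exact ((integrable_exp_neg_mul_sq (by norm_num : (0:ℝ) < 1/2)).comp_sub_right t).const_mul _

lemma glmb_aux_val (t : ℝ) :
    ∫ x : ℝ, Real.exp (-x^2/2 + t*x) = Real.exp (t^2/2) * Real.sqrt (2*Real.pi) := by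
  rw [glmb_aux_eq, integral_const_mul]
  have h2 : ∫ x : ℝ, Real.exp (-(1/2)*(x-t)^2) = ∫ x : ℝ, Real.exp (-(1/2)*x^2) :=
    integral_sub_right_eq_self (fun x => Real.exp (-(1/2)*x^2)) t
  rw [h2, integral_gaussian]
  congr 1
  ring

lemma glmb_density :
    gaussianReal 0 1 = volume.withDensity
      (fun x => ((Real.toNNReal (gaussianPDFReal 0 1 x) : ℝ≥0) : ENNReal)) := by
  rw [gaussianReal_of_var_ne_zero 0 one_ne_zero]
  rfl

lemma glmb_pdf_smul (t : ℝ) :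
    (fun x : ℝ => Real.toNNReal (gaussianPDFReal 0 1 x) • Real.exp (t*x))
      = fun x => (Real.sqrt (2*Real.pi))⁻¹ * Real.exp (-x^2/2 + t*x) := by
  funext x
  rw [NNReal.smul_def, Real.coe_toNNReal _ (gaussianPDFReal_nonneg 0 1 x),
    gaussianPDFReal_def]
  rw [Real.exp_add]
  push_cast
  ring_nf

lemma glmb_meas : Measurable (fun x : ℝ => Real.toNNReal (gaussianPDFReal 0 1 x)) :=
  (measurable_gaussianPDFReal 0 1).real_toNNReal

lemma glmb_exp_integrable (t : ℝ) :
    Integrable (fun z => Real.exp (t*z)) (gaussianReal 0 1) := by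
  rw [glmb_density, integrable_withDensity_iff_integrable_smul glmb_meas, glmb_pdf_smul]
  exact (glmb_aux_int t).const_mul _

lemma glmb_exp_integral (t : ℝ) :
    ∫ z, Real.exp (t*z) ∂(gaussianReal 0 1) = Real.exp (t^2/2) := by
  rw [glmb_density, integral_withDensity_eq_integral_smul glmb_meas, glmb_pdf_smul,
    integral_const_mul, glmb_aux_val]
  have h : Real.sqrt (2*Real.pi) ≠ 0 := by positivity
  field_simp

lemma glmb_log_le (x : ℝ) (hx : 0 ≤ x) : Real.log (1 + x) ≤ 2 * Real.sqrt x := by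
  have hs : 0 ≤ Real.sqrt x := Real.sqrt_nonneg x
  have h1 : (1:ℝ) + x ≤ (1 + Real.sqrt x)^2 := by
    have := Real.sq_sqrt hx
    nlinarith
  calc Real.log (1 + x) ≤ Real.log ((1 + Real.sqrt x)^2) :=
        Real.log_le_log (by linarith) h1
    _ = 2 * Real.log (1 + Real.sqrt x) := by
        rw [Real.log_pow]; push_cast; ring
    _ ≤ 2 * Real.sqrt x := by
        have := Real.log_le_sub_one_of_pos (show (0:ℝ) < 1 + Real.sqrt x by linarith)
        linarith

theorem gaussian_log_moment_bound (b c : ℝ) (hb : 0 < b)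
    (hc : max 1 (26/b) ≤ c) :
    ∫ z, Real.log (1 + b * Real.exp (c*z - c^2/2)) ∂(gaussianReal 0 1)
      ≤ 3*b*Real.exp (-0.085*c^2) := by
  have hc1 : (1:ℝ) ≤ c := le_trans (le_max_left _ _) hc
  have hc0 : (0:ℝ) < c := by linarith
  have hbc : 26 ≤ b * c := by
    have h26 : 26/b ≤ c := le_trans (le_max_right _ _) hc
    calc (26:ℝ) = (26/b)*b := by field_simp
      _ ≤ c * b := by gcongr
      _ = b * c := mul_comm _ _
  set s := Real.sqrt b with hs_def
  have hs0 : 0 < s := Real.sqrt_pos.mpr hb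
  have hs2 : s^2 = b := Real.sq_sqrt hb.le
  -- pointwise bound
  have hpt : ∀ z : ℝ, Real.log (1 + b * Real.exp (c*z - c^2/2))
      ≤ (2 * s * Real.exp (-c^2/4)) * Real.exp ((c/2)*z) := by
    intro z
    have hx : 0 ≤ b * Real.exp (c*z - c^2/2) := by positivity
    refine le_trans (glmb_log_le _ hx) (le_of_eq ?_)
    rw [Real.sqrt_mul hb.le, show Real.exp (c*z - c^2/2)
        = (Real.exp ((c*z - c^2/2)/2))^2 by rw [← Real.exp_nat_mul]; ring_nf,
      Real.sqrt_sq (Real.exp_nonneg _), ← hs_def, mul_assoc, ← Real.exp_add]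
    ring_nf
  -- integral bound
  have hInt : Integrable (fun z => (2 * s * Real.exp (-c^2/4)) * Real.exp ((c/2)*z))
      (gaussianReal 0 1) := (glmb_exp_integrable (c/2)).const_mul _
  have hmain : ∫ z, Real.log (1 + b * Real.exp (c*z - c^2/2)) ∂(gaussianReal 0 1)
      ≤ 2 * s * Real.exp (-c^2/8) := by
    calc ∫ z, Real.log (1 + b * Real.exp (c*z - c^2/2)) ∂(gaussianReal 0 1)
        ≤ ∫ z, (2 * s * Real.exp (-c^2/4)) * Real.exp ((c/2)*z) ∂(gaussianReal 0 1) := by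
          refine integral_mono_of_nonneg (ae_of_all _ fun z => ?_) hInt
            (ae_of_all _ fun z => hpt z)
          exact Real.log_nonneg (by nlinarith [Real.exp_pos (c*z - c^2/2)])
      _ = (2 * s * Real.exp (-c^2/4)) * Real.exp ((c/2)^2/2) := by
          rw [integral_const_mul, glmb_exp_integral]
      _ = 2 * s * Real.exp (-c^2/8) := by
          rw [mul_assoc, ← Real.exp_add]; ring_nf
  refine hmain.trans ?_
  -- final numeric inequality: 2 s e^{-c²/8} ≤ 3 s² e^{-0.085 c²}
  have hsplit : Real.exp (-c^2/8) = Real.exp (-0.085*c^2) * Real.exp (-(0.04*c^2)) := by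
    rw [← Real.exp_add]; ring_nf
  set G := Real.exp (0.04*c^2) with hG_def
  have hG0 : 0 < G := Real.exp_pos _
  have hGinv : Real.exp (-(0.04*c^2)) = G⁻¹ := by rw [hG_def, ← Real.exp_neg]
  have hG2 : G^2 = Real.exp (0.08*c^2) := by rw [hG_def, ← Real.exp_nat_mul]; ring_nf
  have hGlb : 0.08*c^2 + 1 ≤ G^2 := by rw [hG2]; exact Real.add_one_le_exp _
  have hclaim : 2 ≤ 3 * s * G := by
    nlinarith [Real.exp_pos (-0.085*c^2), sq_nonneg (3*s*G - 2), sq_nonneg (3*s*G + 2),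
      mul_pos hs0 hG0, sq_nonneg c]
  have hE : 0 < Real.exp (-0.085*c^2) := Real.exp_pos _
  rw [hsplit, hGinv]
  have key : 2 * s * G⁻¹ ≤ 3 * b := by
    rw [← hs2]
    rw [inv_eq_one_div, mul_one_div, div_le_iff₀ hG0]
    nlinarith [hclaim, hs0.le]
  calc 2 * s * (Real.exp (-0.085*c^2) * G⁻¹) = (2 * s * G⁻¹) * Real.exp (-0.085*c^2) := by ring
    _ ≤ (3*b) * Real.exp (-0.085*c^2) := by gcongr
    _ = 3*b*Real.exp (-0.085*c^2) := by ring
end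

section
/- Let α > 0 and s_1, …, s_n > 0. The function t ↦ (1/2) Σ_{i=1}^n log(1 + s_i α e^{-2αt}/(1 - e^{-2αt})) is convex on (0, ∞). -/
open Real Set Filter

private lemma convexOn_congr' {s : Set ℝ} {f g : ℝ → ℝ} (hfg : ∀ x ∈ s, f x = g x)
    (hg : ConvexOn ℝ s g) : ConvexOn ℝ s f := by
  refine ⟨hg.1, fun x hx y hy a b ha hb hab => ?_⟩
  rw [hfg _ hx, hfg _ hy, hfg _ (hg.1 hx hy ha hb hab)]
  exact hg.2 hx hy ha hb hab

private lemma exp_gt_one {k t : ℝ} (hk : 0 < k) (ht : 0 < t) : 1 < Real.exp (k*t) := by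
  rw [show (1:ℝ) = Real.exp 0 by simp]
  exact Real.exp_lt_exp.2 (by positivity)

private lemma aux_hasDerivAt (c k : ℝ) (hc : 0 < c) (hk : 0 < k) {t : ℝ} (ht : 0 < t) :
    HasDerivAt (fun t => Real.log (Real.exp (k*t) - 1 + c) - Real.log (Real.exp (k*t) - 1))
      (Real.exp (k*t) * k / (Real.exp (k*t) - 1 + c)
        - Real.exp (k*t) * k / (Real.exp (k*t) - 1)) t := by
  have hW : 1 < Real.exp (k*t) := exp_gt_one hk ht
  have hexp : HasDerivAt (fun t : ℝ => Real.exp (k*t)) (Real.exp (k*t) * k) t := by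
    have : HasDerivAt (fun t : ℝ => k * t) k t := by
      simpa using (hasDerivAt_id t).const_mul k
    exact this.exp
  have h1 : HasDerivAt (fun t : ℝ => Real.exp (k*t) - 1 + c) (Real.exp (k*t) * k) t :=
    (hexp.sub_const 1).add_const c
  have h2 : HasDerivAt (fun t : ℝ => Real.exp (k*t) - 1) (Real.exp (k*t) * k) t :=
    hexp.sub_const 1
  have hA : Real.exp (k*t) - 1 + c ≠ 0 := by nlinarith
  have hB : Real.exp (k*t) - 1 ≠ 0 := by nlinarith
  exact (h1.log hA).sub (h2.log hB)

private lemma aux_deriv_hasDerivAt (c k : ℝ) (hc : 0 < c) (hk : 0 < k) {t : ℝ} (ht : 0 < t) :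
    HasDerivAt (fun t => Real.exp (k*t) * k / (Real.exp (k*t) - 1 + c)
        - Real.exp (k*t) * k / (Real.exp (k*t) - 1))
      ((Real.exp (k*t) * k * k * (Real.exp (k*t) - 1 + c)
          - Real.exp (k*t) * k * (Real.exp (k*t) * k)) / (Real.exp (k*t) - 1 + c)^2
        - (Real.exp (k*t) * k * k * (Real.exp (k*t) - 1)
          - Real.exp (k*t) * k * (Real.exp (k*t) * k)) / (Real.exp (k*t) - 1)^2) t := by
  have hW : 1 < Real.exp (k*t) := exp_gt_one hk ht
  have hexp : HasDerivAt (fun t : ℝ => Real.exp (k*t)) (Real.exp (k*t) * k) t := by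
    have : HasDerivAt (fun t : ℝ => k * t) k t := by
      simpa using (hasDerivAt_id t).const_mul k
    exact this.exp
  have hnum : HasDerivAt (fun t : ℝ => Real.exp (k*t) * k) (Real.exp (k*t) * k * k) t :=
    hexp.mul_const k
  have h1 : HasDerivAt (fun t : ℝ => Real.exp (k*t) - 1 + c) (Real.exp (k*t) * k) t :=
    (hexp.sub_const 1).add_const c
  have h2 : HasDerivAt (fun t : ℝ => Real.exp (k*t) - 1) (Real.exp (k*t) * k) t :=
    hexp.sub_const 1
  have hA : Real.exp (k*t) - 1 + c ≠ 0 := by nlinarith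
  have hB : Real.exp (k*t) - 1 ≠ 0 := by nlinarith
  exact (hnum.div h1 hA).sub (hnum.div h2 hB)

private lemma aux_convex (c k : ℝ) (hc : 0 < c) (hk : 0 < k) :
    ConvexOn ℝ (Set.Ioi 0)
      (fun t => Real.log (Real.exp (k*t) - 1 + c) - Real.log (Real.exp (k*t) - 1)) := by
  set f : ℝ → ℝ := fun t => Real.log (Real.exp (k*t) - 1 + c) - Real.log (Real.exp (k*t) - 1)
    with hf
  set D : ℝ → ℝ := fun t => Real.exp (k*t) * k / (Real.exp (k*t) - 1 + c)
        - Real.exp (k*t) * k / (Real.exp (k*t) - 1) with hD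
  have hIoi : interior (Set.Ioi (0:ℝ)) = Set.Ioi 0 := interior_Ioi
  have hderivEq : ∀ t ∈ Set.Ioi (0:ℝ), deriv f t = D t := fun t ht =>
    (aux_hasDerivAt c k hc hk ht).deriv
  have hEv : ∀ t ∈ Set.Ioi (0:ℝ), deriv f =ᶠ[nhds t] D := fun t ht =>
    Filter.eventuallyEq_of_mem (Ioi_mem_nhds ht) hderivEq
  refine convexOn_of_deriv2_nonneg (convex_Ioi 0) ?_ ?_ ?_ ?_
  · -- continuity
    intro t ht
    exact (aux_hasDerivAt c k hc hk ht).continuousAt.continuousWithinAt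
  · rw [hIoi]
    intro t ht
    exact (aux_hasDerivAt c k hc hk ht).differentiableAt.differentiableWithinAt
  · rw [hIoi]
    intro t ht
    have hDd : DifferentiableAt ℝ D t := (aux_deriv_hasDerivAt c k hc hk ht).differentiableAt
    exact ((hEv t ht).differentiableAt_iff.mpr hDd).differentiableWithinAt
  · rw [hIoi]
    intro t ht
    have hW : 1 < Real.exp (k*t) := exp_gt_one hk ht
    have h2 : deriv (deriv f) t = deriv D t := Filter.EventuallyEq.deriv_eq (hEv t ht)
    have h3 : deriv D t = (Real.exp (k*t) * k * k * (Real.exp (k*t) - 1 + c)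
          - Real.exp (k*t) * k * (Real.exp (k*t) * k)) / (Real.exp (k*t) - 1 + c)^2
        - (Real.exp (k*t) * k * k * (Real.exp (k*t) - 1)
          - Real.exp (k*t) * k * (Real.exp (k*t) * k)) / (Real.exp (k*t) - 1)^2 :=
      (aux_deriv_hasDerivAt c k hc hk ht).deriv
    simp only [Function.iterate_succ_apply', Function.iterate_zero, id_eq]
    rw [h2, h3]
    set W := Real.exp (k*t)
    have hA : (0:ℝ) < W - 1 + c := by nlinarith
    have hB : (0:ℝ) < W - 1 := by nlinarith
    rw [div_sub_div _ _ (pow_ne_zero 2 hA.ne') (pow_ne_zero 2 hB.ne')]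
    apply div_nonneg _ (by positivity)
    have key : (W * k * k * (W - 1 + c) - W * k * (W * k)) * (W - 1)^2
        - (W - 1 + c)^2 * (W * k * k * (W - 1) - W * k * (W * k))
        = k^2 * W * c * (W^2 + c - 1) := by ring
    rw [key]
    have : (0:ℝ) < W^2 + c - 1 := by nlinarith
    positivity

private lemma sum_convex {s : Set ℝ} (hconv : Convex ℝ s) {n : ℕ} {g : Fin n → ℝ → ℝ}
    (hg : ∀ i, ConvexOn ℝ s (g i)) :
    ConvexOn ℝ s (fun t => ∑ i, g i t) := by
  induction (Finset.univ : Finset (Fin n)) using Finset.cons_induction with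
  | empty => simpa using convexOn_const (0:ℝ) hconv
  | cons a t hat ih =>
    simp only [Finset.sum_cons]
    exact (hg a).add ih

theorem gaussian_mi_convex (α : ℝ) (hα : 0 < α) (n : ℕ) (s : Fin n → ℝ)
    (hs : ∀ i, 0 < s i) :
    ConvexOn ℝ (Set.Ioi 0)
      (fun t => (1/2) * ∑ i, Real.log
        (1 + s i * α * Real.exp (-2*α*t)/(1 - Real.exp (-2*α*t)))) := by
  have hk : (0:ℝ) < 2*α := by linarith
  have hsum : ConvexOn ℝ (Set.Ioi 0)
      (fun t => ∑ i, (Real.log (Real.exp (2*α*t) - 1 + s i * α)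
        - Real.log (Real.exp (2*α*t) - 1))) :=
    sum_convex (convex_Ioi 0) fun i => aux_convex (s i * α) (2*α) (mul_pos (hs i) hα) hk
  have hhalf : ConvexOn ℝ (Set.Ioi 0)
      (fun t => (1/2) * ∑ i, (Real.log (Real.exp (2*α*t) - 1 + s i * α)
        - Real.log (Real.exp (2*α*t) - 1))) := by
    have := hsum.smul (by norm_num : (0:ℝ) ≤ 1/2)
    simpa [smul_eq_mul] using this
  refine convexOn_congr' (fun t ht => ?_) hhalf
  have hW : 1 < Real.exp (2*α*t) := exp_gt_one hk ht
  congr 1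
  apply Finset.sum_congr rfl
  intro i _
  have hE : Real.exp (-2*α*t) = (Real.exp (2*α*t))⁻¹ := by
    rw [← Real.exp_neg]; ring_nf
  have hWne : Real.exp (2*α*t) ≠ 0 := (Real.exp_pos _).ne'
  have hB : (0:ℝ) < Real.exp (2*α*t) - 1 := by linarith
  have hA : (0:ℝ) < Real.exp (2*α*t) - 1 + s i * α := by
    have := hs i; nlinarith
  have harg : 1 + s i * α * Real.exp (-2*α*t)/(1 - Real.exp (-2*α*t))
      = (Real.exp (2*α*t) - 1 + s i * α) / (Real.exp (2*α*t) - 1) := by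
    rw [hE]
    have hx : (Real.exp (2*α*t))⁻¹ < 1 := inv_lt_one_of_one_lt₀ hW
    have h1 : 1 - (Real.exp (2*α*t))⁻¹ ≠ 0 := ne_of_gt (by linarith)
    field_simp
    have hB' : Real.exp (α*2*t) - 1 ≠ 0 := by rw [show α*2*t = 2*α*t by ring]; exact hB.ne'
    rw [eq_div_iff hB', add_mul, div_mul_cancel₀ _ hB']
    ring
  rw [harg, Real.log_div hA.ne' hB.ne']
end
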